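/- Let π ∈ Δ_K have all positive coordinates and 0 < β₁ < β₂. Then the Shannon entropy satisfies H(π_{β₂}) ≤ H(π_{β₁}), where (π_β)_k = π_k^β / Σ_j π_j^β. -/

import Mathlib

open Real Finset

private lemma hasDerivAt_Z {K : ℕ} (p : Fin K → ℝ) (hpos : ∀ k, 0 < p k) (β : ℝ) :
    HasDerivAt (fun b => ∑ k, p k ^ b) (∑ k, p k ^ β * Real.log (p k)) β :=
  HasDerivAt.fun_sum fun k _ => (Real.hasStrictDerivAt_const_rpow (hpos k) β).hasDerivAt

private lemma hasDerivAt_W {K : ℕ} (p : Fin K → ℝ) (hpos : ∀ k, 0 < p k) (β : ℝ) :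
    HasDerivAt (fun b => ∑ k, p k ^ b * Real.log (p k))
      (∑ k, p k ^ β * Real.log (p k) ^ 2) β := by
  have : ∀ k : Fin K, HasDerivAt (fun b => p k ^ b * Real.log (p k))
      (p k ^ β * Real.log (p k) ^ 2) β := by
    intro k
    have := ((Real.hasStrictDerivAt_const_rpow (hpos k) β).hasDerivAt).mul_const
      (Real.log (p k))
    exact this.congr_deriv (by ring)
  exact HasDerivAt.fun_sum fun k _ => this k

private lemma Zpos {K : ℕ} (hK : 1 ≤ K) (p : Fin K → ℝ) (hpos : ∀ k, 0 < p k) (β : ℝ) :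
    0 < ∑ k, p k ^ β := by
  have : (Finset.univ : Finset (Fin K)).Nonempty := by
    refine Finset.univ_nonempty_iff.mpr ?_
    exact Fin.pos_iff_nonempty.mp hK
  exact Finset.sum_pos (fun k _ => Real.rpow_pos_of_pos (hpos k) β) this

theorem tempered_entropy_antitone {K : ℕ} (hK : 1 ≤ K) (p : Fin K → ℝ)
    (hpos : ∀ k, 0 < p k) (hsum : ∑ k, p k = 1)
    (β₁ β₂ : ℝ) (h1 : 0 < β₁) (h12 : β₁ < β₂) :
    -∑ k, (p k ^ β₂ / ∑ j, p j ^ β₂) * Real.log (p k ^ β₂ / ∑ j, p j ^ β₂)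
      ≤ -∑ k, (p k ^ β₁ / ∑ j, p j ^ β₁) * Real.log (p k ^ β₁ / ∑ j, p j ^ β₁) := by
  set Z : ℝ → ℝ := fun b => ∑ k, p k ^ b with hZ
  set W : ℝ → ℝ := fun b => ∑ k, p k ^ b * Real.log (p k) with hW
  have hZpos : ∀ b, 0 < Z b := Zpos hK p hpos
  set g : ℝ → ℝ := fun b => Real.log (Z b) - b * (W b / Z b) with hg
  -- the entropy at β equals g β
  have key : ∀ b : ℝ,
      -∑ k, (p k ^ b / Z b) * Real.log (p k ^ b / Z b) = g b := by
    intro b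
    have hz := hZpos b
    have expand : ∀ k : Fin K, (p k ^ b / Z b) * Real.log (p k ^ b / Z b)
        = b * (p k ^ b * Real.log (p k)) / Z b - (p k ^ b / Z b) * Real.log (Z b) := by
      intro k
      rw [Real.log_div (Real.rpow_pos_of_pos (hpos k) b).ne' hz.ne',
        Real.log_rpow (hpos k)]
      field_simp
    have hsum' : (∑ k, (p k ^ b / Z b) * Real.log (p k ^ b / Z b))
        = ∑ k, (b * (p k ^ b * Real.log (p k)) / Z b - (p k ^ b / Z b) * Real.log (Z b)) :=
      Finset.sum_congr rfl fun k _ => expand k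
    have h2 : ∑ k, (p k ^ b / Z b) * Real.log (Z b) = Real.log (Z b) := by
      rw [← Finset.sum_mul, ← Finset.sum_div]
      rw [show (∑ k, p k ^ b) = Z b from rfl, div_self hz.ne', one_mul]
    have h1 : (∑ k, b * (p k ^ b * Real.log (p k)) / Z b) = b * (W b / Z b) := by
      rw [← Finset.sum_div, ← Finset.mul_sum]
      rw [show (∑ k, p k ^ b * Real.log (p k)) = W b from rfl, mul_div_assoc]
    rw [hsum', Finset.sum_sub_distrib, h1, h2, hg]
    ring
  rw [key β₁, key β₂]
  -- g has derivative g' b = -(b * (W' b * Z b - W b ^ 2)) / Z b ^ 2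
  have hdg : ∀ b : ℝ, HasDerivAt g
      (W b / Z b - (W b / Z b + b * (((∑ k, p k ^ b * Real.log (p k) ^ 2) * Z b
        - W b * W b) / Z b ^ 2))) b := by
    intro b
    have hZd := hasDerivAt_Z p hpos b
    have hWd := hasDerivAt_W p hpos b
    have hlog : HasDerivAt (fun x => Real.log (Z x)) (W b / Z b) b := by
      simpa using hZd.log (ne_of_gt (hZpos b))
    have hdiv : HasDerivAt (fun x => W x / Z x)
        (((∑ k, p k ^ b * Real.log (p k) ^ 2) * Z b - W b * W b) / Z b ^ 2) b :=
      hWd.div hZd (ne_of_gt (hZpos b))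
    have hmul : HasDerivAt (fun x => x * (W x / Z x))
        (1 * (W b / Z b) + b * (((∑ k, p k ^ b * Real.log (p k) ^ 2) * Z b
          - W b * W b) / Z b ^ 2)) b := (hasDerivAt_id b).mul hdiv
    exact (hlog.sub hmul).congr_deriv (by ring)
  have hdiff : Differentiable ℝ g := fun b => (hdg b).differentiableAt
  -- Cauchy–Schwarz: W b ^ 2 ≤ W' b * Z b
  have hCS : ∀ b : ℝ, W b * W b ≤ (∑ k, p k ^ b * Real.log (p k) ^ 2) * Z b := by
    intro b
    have h := Finset.sum_mul_sq_le_sq_mul_sq Finset.univ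
      (fun k : Fin K => p k ^ (b / 2)) (fun k : Fin K => p k ^ (b / 2) * Real.log (p k))
    have e1 : ∀ k : Fin K, p k ^ (b / 2) * (p k ^ (b / 2) * Real.log (p k))
        = p k ^ b * Real.log (p k) := by
      intro k
      rw [← mul_assoc, ← Real.rpow_add (hpos k)]
      ring_nf
    have e2 : ∀ k : Fin K, (p k ^ (b / 2)) ^ 2 = p k ^ b := by
      intro k
      rw [← Real.rpow_natCast (p k ^ (b/2)) 2, ← Real.rpow_mul (hpos k).le]
      norm_num
    have e3 : ∀ k : Fin K, (p k ^ (b / 2) * Real.log (p k)) ^ 2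
        = p k ^ b * Real.log (p k) ^ 2 := by
      intro k
      rw [mul_pow, e2 k]
    simp only [e1, e2, e3] at h
    calc W b * W b = (∑ k, p k ^ b * Real.log (p k)) ^ 2 := by rw [hW]; ring
      _ ≤ (∑ k, p k ^ b) * ∑ k, p k ^ b * Real.log (p k) ^ 2 := h
      _ = (∑ k, p k ^ b * Real.log (p k) ^ 2) * Z b := by rw [hZ]; ring
  have hanti : AntitoneOn g (Set.Ici (0 : ℝ)) := by
    apply antitoneOn_of_deriv_nonpos (convex_Ici 0) hdiff.continuous.continuousOn
      hdiff.differentiableOn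
    intro b hb
    rw [interior_Ici] at hb
    rw [(hdg b).deriv]
    have hb0 : 0 < b := hb
    have := hCS b
    have hZ2 : (0:ℝ) < Z b ^ 2 := pow_pos (hZpos b) 2
    have : 0 ≤ b * (((∑ k, p k ^ b * Real.log (p k) ^ 2) * Z b - W b * W b) / Z b ^ 2) := by
      apply mul_nonneg hb0.le
      apply div_nonneg _ hZ2.le
      linarith
    linarith
  exact hanti (Set.mem_Ici.mpr h1.le) (Set.mem_Ici.mpr (h1.trans h12).le) h12.le
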